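/- Let f : ℂ × ℂⁿ → ℂ be analytic in a neighbourhood of the origin, with Taylor expansion f(t,z) = Σ_{(k,β) ∈ ℕ × ℕⁿ} c_{k,β} t^k z^β at the origin. Let α₁, …, α_m ∈ ℕⁿ each have first component 0, write α_i = (0, a_{i2}, …, a_{in}), and set a_j := max_{1≤i≤m} a_{ij} for 2 ≤ j ≤ n. Assume: (a) for every (k,β) with c_{k,β} ≠ 0 and β₁ ≥ 1, one has β_j ≥ a_j for all 2 ≤ j ≤ n; and (b) for every (k,β) with c_{k,β} ≠ 0, k ≥ 1 and β₁ = 0, the vector (β₂,…,β_n), regarded as a vector of ℝ^{n−1}, lies in the Minkowski sum of the convex hull of {(a_{i2},…,a_{in}) : 1 ≤ i ≤ m} and the nonnegative orthant ℝ₊^{n−1}. Then there exist constants C > 0 and r > 0 such that for all (t,z) with |t| ≤ r and |z_j| ≤ r for all j, one has |∂f/∂t (t,z)| + |∂f/∂z₁ (t,z)| ≤ C · Σ_{i=1}^m |z^{α_i}|. (This is relation (r2) in Step 2 of the proof of Theorem 1: condition (iii) of admissibility forces |∂_{t,z₁} f(t,z)| ≲ Σ_i |z^{α_i}| near the origin.)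 -/

import Mathlib

open scoped Pointwise
open Finset Filter Topology

noncomputable def Complex.abs : AbsoluteValue ℂ ℝ where
  toFun z := ‖z‖
  map_mul' := norm_mul
  nonneg' := norm_nonneg
  eq_zero' _ := norm_eq_zero
  add_le' := norm_add_le

lemma Complex.norm_eq_abs (z : ℂ) : ‖z‖ = Complex.abs z := rfl

lemma Complex.abs_ofReal (x : ℝ) : Complex.abs (x : ℂ) = |x| := by
  rw [← Complex.norm_eq_abs, Complex.norm_real, Real.norm_eq_abs]



lemma abs_pow_sub_pow_le' (a b : ℂ) (s : ℝ) (k : ℕ) (ha : Complex.abs a ≤ s)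
    (hb : Complex.abs b ≤ s) :
    Complex.abs (a ^ k - b ^ k) ≤ k * s ^ (k - 1) * Complex.abs (a - b) := by
  have hs : 0 ≤ s := le_trans (Complex.abs.nonneg a) ha
  rw [← geom_sum₂_mul a b k, map_mul]
  have h1 : Complex.abs (∑ i ∈ Finset.range k, a ^ i * b ^ (k - 1 - i)) ≤ k * s ^ (k - 1) := by
    calc Complex.abs (∑ i ∈ Finset.range k, a ^ i * b ^ (k - 1 - i))
        ≤ ∑ i ∈ Finset.range k, Complex.abs (a ^ i * b ^ (k - 1 - i)) := by
          exact Complex.abs.sum_le _ _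
      _ ≤ ∑ _i ∈ Finset.range k, s ^ (k - 1) := by
          apply Finset.sum_le_sum
          intro i hi
          rw [Finset.mem_range] at hi
          rw [map_mul, map_pow, map_pow]
          calc Complex.abs a ^ i * Complex.abs b ^ (k - 1 - i) ≤ s ^ i * s ^ (k - 1 - i) := by
                gcongr <;> exact Complex.abs.nonneg _
            _ = s ^ (k - 1) := by
                rw [← pow_add]
                congr 1
                omega
      _ = k * s ^ (k - 1) := by
          rw [Finset.sum_const, Finset.card_range, nsmul_eq_mul]
  exact mul_le_mul_of_nonneg_right h1 (Complex.abs.nonneg _)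

lemma exists_convex_weights {m : ℕ} {E : Type} [AddCommGroup E] [Module ℝ E]
    (g : Fin m → E) {x : E} (hx : x ∈ convexHull ℝ (Set.range g)) :
    ∃ lam : Fin m → ℝ, (∀ i, 0 ≤ lam i) ∧ ∑ i, lam i = 1 ∧ ∑ i, lam i • g i = x := by
  obtain ⟨ι, _, w, z, hw0, hw1, hz, hxx⟩ := mem_convexHull_iff_exists_fintype.1 hx
  choose φ hφ using hz
  refine ⟨fun i' => ∑ i ∈ Finset.univ.filter (fun i => φ i = i'), w i, ?_, ?_, ?_⟩
  · intro i'; exact Finset.sum_nonneg fun i _ => hw0 i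
  · rw [Finset.sum_fiberwise]; exact hw1
  · rw [← hxx, ← Finset.sum_fiberwise Finset.univ φ (fun i => w i • z i)]
    apply Finset.sum_congr rfl
    intro i' _
    rw [Finset.sum_smul]
    apply Finset.sum_congr rfl
    intro i hi
    rw [Finset.mem_filter] at hi
    rw [← hi.2, hφ]

lemma exists_convex_weights' {m : ℕ} {E : Type} [AddCommGroup E] [Module ℝ E]
    (g : Fin m → E) {x : E} (hx : x ∈ convexHull ℝ (Set.range g)) :
    ∃ lam : Fin m → ℝ, (∀ i, 0 ≤ lam i) ∧ ∑ i, lam i = 1 ∧ ∑ i, lam i • g i = x := by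
  obtain ⟨ι, _, w, z, hw0, hw1, hz, hxx⟩ := mem_convexHull_iff_exists_fintype.1 hx
  choose φ hφ using hz
  refine ⟨fun i' => ∑ i ∈ Finset.univ.filter (fun i => φ i = i'), w i, ?_, ?_, ?_⟩
  · intro i'; exact Finset.sum_nonneg fun i _ => hw0 i
  · rw [Finset.sum_fiberwise]; exact hw1
  · rw [← hxx, ← Finset.sum_fiberwise Finset.univ φ (fun i => w i • z i)]
    apply Finset.sum_congr rfl
    intro i' _
    rw [Finset.sum_smul]
    apply Finset.sum_congr rfl
    intro i hi
    rw [Finset.mem_filter] at hi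
    rw [← hi.2, hφ]

lemma key_monomial {n m : ℕ} [NeZero n] (hm : 0 < m)
    (α : Fin m → Fin n → ℕ) (hα0 : ∀ i, α i 0 = 0)
    (r : ℝ) (hr0 : 0 < r) (hr1 : r ≤ 1)
    (x : Fin n → ℝ) (hx0 : ∀ j, 0 ≤ x j) (hx : ∀ j, x j ≤ r)
    (β : Fin n → ℕ)
    (hcase : (∀ j : Fin n, j ≠ 0 → (Finset.univ.sup fun i => α i j) ≤ β j) ∨
      ((fun j : {j : Fin n // j ≠ 0} => (β j.1 : ℝ)) ∈
        convexHull ℝ (Set.range fun i => fun j : {j : Fin n // j ≠ 0} => (α i j.1 : ℝ)) +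
          {x : {j : Fin n // j ≠ 0} → ℝ | ∀ j, 0 ≤ x j})) :
    ∏ j ∈ Finset.univ.erase 0, x j ^ β j ≤
      (∑ i, ∏ j, x j ^ α i j) *
        r ^ ((∑ j ∈ Finset.univ.erase 0, β j) -
          ∑ j ∈ Finset.univ.erase 0, (Finset.univ.sup fun i => α i j)) := by
  classical
  set S := Finset.univ.erase (0 : Fin n) with hS
  set D := ∑ j ∈ S, (Finset.univ.sup fun i => α i j) with hD
  set N' := ∑ j ∈ S, β j with hN'
  set A := ∑ i, ∏ j, x j ^ α i j with hA
  have hA0 : 0 ≤ A := Finset.sum_nonneg fun i _ => Finset.prod_nonneg fun j _ =>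
    pow_nonneg (hx0 j) _
  -- bound a single `G i ≤ A`, after extending product over `S` to `univ`
  have hGA : ∀ i : Fin m, ∏ j ∈ S, x j ^ α i j ≤ A := by
    intro i
    have he : ∏ j ∈ S, x j ^ α i j = ∏ j, x j ^ α i j := by
      rw [← Finset.mul_prod_erase Finset.univ _ (Finset.mem_univ (0 : Fin n)), hα0, pow_zero,
        one_mul]
    rw [he]
    exact Finset.single_le_sum (fun i _ => Finset.prod_nonneg fun j _ => pow_nonneg (hx0 j) _)
      (Finset.mem_univ i)
  rcases hcase with hcA | hcB
  · -- case (a)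
    let i0 : Fin m := ⟨0, hm⟩
    have hαβ : ∀ j ∈ S, α i0 j ≤ β j := by
      intro j hj
      exact le_trans (Finset.le_sup (f := fun i => α i j) (Finset.mem_univ i0)) (hcA j (Finset.ne_of_mem_erase hj))
    calc ∏ j ∈ S, x j ^ β j ≤ ∏ j ∈ S, (x j ^ α i0 j * r ^ (β j - α i0 j)) := by
          apply Finset.prod_le_prod (fun j _ => pow_nonneg (hx0 j) _)
          intro j hj
          have hle := hαβ j hj
          calc x j ^ β j = x j ^ α i0 j * x j ^ (β j - α i0 j) := by
                rw [← pow_add]; congr 1; omega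
            _ ≤ x j ^ α i0 j * r ^ (β j - α i0 j) :=
                mul_le_mul_of_nonneg_left (pow_le_pow_left₀ (hx0 j) (hx j) _)
                  (pow_nonneg (hx0 j) _)
      _ = (∏ j ∈ S, x j ^ α i0 j) * ∏ j ∈ S, r ^ (β j - α i0 j) := Finset.prod_mul_distrib
      _ = (∏ j ∈ S, x j ^ α i0 j) * r ^ (∑ j ∈ S, (β j - α i0 j)) := by
          rw [Finset.prod_pow_eq_pow_sum]
      _ ≤ A * r ^ (N' - D) := by
          apply mul_le_mul (hGA i0) _ (pow_nonneg hr0.le _) hA0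
          apply pow_le_pow_of_le_one hr0.le hr1
          have h1 : ∑ j ∈ S, (β j - α i0 j) = N' - ∑ j ∈ S, α i0 j := by
            rw [hN']
            rw [eq_tsub_iff_add_eq_of_le (Finset.sum_le_sum hαβ), ← Finset.sum_add_distrib]
            apply Finset.sum_congr rfl
            intro j hj
            have := hαβ j hj
            omega
          have h2 : ∑ j ∈ S, α i0 j ≤ D := by
            rw [hD]
            exact Finset.sum_le_sum fun j _ =>
              Finset.le_sup (f := fun i => α i j) (Finset.mem_univ i0)
          omega
  · -- case (b)
    obtain ⟨y, hy, w, hw, hyw⟩ := Set.mem_add.1 hcB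
    obtain ⟨lam, hlam0, hlam1, hlamg⟩ := exists_convex_weights' _ hy
    set b : Fin n → ℝ := fun j => ∑ i, lam i * α i j with hbdef
    have hb0 : ∀ j, 0 ≤ b j := fun j =>
      Finset.sum_nonneg fun i _ => mul_nonneg (hlam0 i) (Nat.cast_nonneg _)
    have hbβ : ∀ j ∈ S, b j ≤ (β j : ℝ) := by
      intro j hj
      have hj0 : j ≠ 0 := Finset.ne_of_mem_erase hj
      have h1 := congrFun hlamg ⟨j, hj0⟩
      have h2 := congrFun hyw ⟨j, hj0⟩
      simp only [Finset.sum_apply, Pi.smul_apply, smul_eq_mul] at h1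
      have : y ⟨j, hj0⟩ = b j := by rw [← h1]
      have hwj := hw ⟨j, hj0⟩
      simp only [Pi.add_apply] at h2
      rw [this] at h2
      linarith
    -- Step 1 & 2: pass to rpow and extract `r` powers
    have step1 : ∏ j ∈ S, x j ^ β j ≤
        (∏ j ∈ S, x j ^ (b j)) * r ^ (∑ j ∈ S, ((β j : ℝ) - b j)) := by
      rw [Real.rpow_sum_of_pos hr0, ← Finset.prod_mul_distrib]
      have : ∀ j ∈ S, x j ^ β j ≤ x j ^ (b j) * r ^ ((β j : ℝ) - b j) := by
        intro j hj
        by_cases hxj : x j = 0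
        · by_cases hβj : β j = 0
          · have hbj : b j = 0 := le_antisymm (by simpa [hβj] using hbβ j hj) (hb0 j)
            simp [hxj, hβj, hbj]
          · rw [hxj, zero_pow hβj]
            positivity
        · have hxp : 0 < x j := lt_of_le_of_ne (hx0 j) (Ne.symm hxj)
          calc x j ^ β j = x j ^ (β j : ℝ) := by rw [Real.rpow_natCast]
            _ = x j ^ (b j) * x j ^ ((β j : ℝ) - b j) := by
                rw [← Real.rpow_add hxp]; ring_nf
            _ ≤ x j ^ (b j) * r ^ ((β j : ℝ) - b j) := by
                apply mul_le_mul_of_nonneg_left _ (Real.rpow_nonneg (hx0 j) _)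
                apply Real.rpow_le_rpow (hx0 j) (hx j)
                have := hbβ j hj; linarith
      exact Finset.prod_le_prod (fun j _ => pow_nonneg (hx0 j) _) this
    have step3 : r ^ (∑ j ∈ S, ((β j : ℝ) - b j)) ≤ r ^ ((N' - D : ℕ) : ℝ) := by
      apply Real.rpow_le_rpow_of_exponent_ge hr0 hr1
      have hsb : ∑ j ∈ S, b j ≤ (D : ℝ) := by
        have : ∀ j ∈ S, b j ≤ ((Finset.univ.sup fun i => α i j : ℕ) : ℝ) := by
          intro j hj
          rw [hbdef]
          calc ∑ i, lam i * (α i j : ℝ) ≤ ∑ i, lam i * ((Finset.univ.sup fun i => α i j : ℕ) : ℝ) := by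
                apply Finset.sum_le_sum
                intro i _
                exact mul_le_mul_of_nonneg_left (Nat.cast_le.2 (Finset.le_sup (f := fun i => α i j) (Finset.mem_univ i))) (hlam0 i)
            _ = ((Finset.univ.sup fun i => α i j : ℕ) : ℝ) := by
                rw [← Finset.sum_mul, hlam1, one_mul]
        calc ∑ j ∈ S, b j ≤ ∑ j ∈ S, ((Finset.univ.sup fun i => α i j : ℕ) : ℝ) :=
              Finset.sum_le_sum this
          _ = (D : ℝ) := by rw [hD]; push_cast; ring
      have hsb' : ∑ j ∈ S, b j ≤ (N' : ℝ) := by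
        calc ∑ j ∈ S, b j ≤ ∑ j ∈ S, (β j : ℝ) := Finset.sum_le_sum hbβ
          _ = (N' : ℝ) := by rw [hN']; push_cast; ring
      have he : ∑ j ∈ S, ((β j : ℝ) - b j) = (N' : ℝ) - ∑ j ∈ S, b j := by
        rw [Finset.sum_sub_distrib, hN']; push_cast; ring
      rw [he]
      rcases le_or_gt D N' with h | h
      · rw [Nat.cast_sub h]; linarith
      · have : N' - D = 0 := by omega
        rw [this]; simp; linarith
    -- Step 4
    have step4 : ∏ j ∈ S, x j ^ (b j) ≤ A := by
      by_cases hzero : ∃ j ∈ S, x j = 0 ∧ b j ≠ 0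
      · obtain ⟨j, hj, hxj, hbj⟩ := hzero
        have : ∏ j ∈ S, x j ^ (b j) = 0 := by
          apply Finset.prod_eq_zero hj
          rw [hxj, Real.zero_rpow hbj]
        rw [this]; exact hA0
      · push_neg at hzero
        set y' : Fin n → ℝ := fun j => if x j = 0 then 1 else x j with hy'def
        have hy'pos : ∀ j, 0 < y' j := by
          intro j
          rw [hy'def]
          by_cases hxj : x j = 0
          · simp [hxj]
          · simp [hxj]; exact lt_of_le_of_ne (hx0 j) (Ne.symm hxj)
        have e1 : ∏ j ∈ S, x j ^ (b j) = ∏ j ∈ S, y' j ^ (b j) := by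
          apply Finset.prod_congr rfl
          intro j hj
          by_cases hxj : x j = 0
          · rw [hzero j hj hxj, Real.rpow_zero, Real.rpow_zero]
          · simp [hy'def, hxj]
        -- exchange
        set H : Fin m → ℝ := fun i => ∏ j ∈ S, y' j ^ (α i j : ℝ) with hHdef
        have hHpos : ∀ i, 0 < H i := fun i =>
          Finset.prod_pos fun j _ => Real.rpow_pos_of_pos (hy'pos j) _
        have e2 : ∏ j ∈ S, y' j ^ (b j) = ∏ i, (H i) ^ (lam i) := by
          calc ∏ j ∈ S, y' j ^ (b j) = ∏ j ∈ S, ∏ i, y' j ^ (lam i * (α i j : ℝ)) := by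
                apply Finset.prod_congr rfl
                intro j _
                rw [hbdef, Real.rpow_sum_of_pos (hy'pos j)]
            _ = ∏ i, ∏ j ∈ S, y' j ^ (lam i * (α i j : ℝ)) := Finset.prod_comm
            _ = ∏ i, (H i) ^ (lam i) := by
                apply Finset.prod_congr rfl
                intro i _
                rw [hHdef, ← Real.finset_prod_rpow S _ (fun j _ => Real.rpow_nonneg (hy'pos j).le _)]
                apply Finset.prod_congr rfl
                intro j _
                rw [← Real.rpow_mul (hy'pos j).le, mul_comm]
        -- the supported indices
        set T := Finset.univ.filter (fun i => lam i ≠ 0) with hT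
        have hTne : T.Nonempty := by
          by_contra hne
          rw [Finset.not_nonempty_iff_eq_empty] at hne
          have : ∑ i, lam i = 0 := by
            apply Finset.sum_eq_zero
            intro i _
            by_contra hi
            have : i ∈ T := by rw [hT]; simp [hi]
            rw [hne] at this; exact absurd this (Finset.notMem_empty i)
          rw [hlam1] at this; norm_num at this
        have e3 : ∏ i, (H i) ^ (lam i) = ∏ i ∈ T, (H i) ^ (lam i) := by
          symm
          apply Finset.prod_subset (Finset.subset_univ T)
          intro i _ hi
          rw [hT] at hi; simp at hi
          rw [hi, Real.rpow_zero]
        set Hs := T.sup' hTne H with hHs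
        have hHsle : ∏ i ∈ T, (H i) ^ (lam i) ≤ Hs := by
          obtain ⟨i₁, hi₁, hi₁e⟩ := Finset.exists_mem_eq_sup' hTne H
          calc ∏ i ∈ T, (H i) ^ (lam i) ≤ ∏ i ∈ T, Hs ^ (lam i) := by
                apply Finset.prod_le_prod (fun i _ => Real.rpow_nonneg (hHpos i).le _)
                intro i hi
                exact Real.rpow_le_rpow (hHpos i).le (Finset.le_sup' H hi) (hlam0 i)
            _ = Hs ^ (∑ i ∈ T, lam i) := by
                rw [Real.rpow_sum_of_pos]
                rw [hHs, hi₁e]; exact hHpos i₁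
            _ = Hs := by
                have : ∑ i ∈ T, lam i = 1 := by
                  rw [← hlam1]
                  apply Finset.sum_subset (Finset.subset_univ T)
                  intro i _ hi
                  rw [hT] at hi; simp at hi; exact hi
                rw [this, Real.rpow_one]
        have hHsA : Hs ≤ A := by
          obtain ⟨i₁, hi₁, hi₁e⟩ := Finset.exists_mem_eq_sup' hTne H
          have hlami₁ : lam i₁ ≠ 0 := by rw [hT] at hi₁; simpa using hi₁
          have hHG : H i₁ = ∏ j ∈ S, x j ^ α i₁ j := by
            rw [hHdef]
            apply Finset.prod_congr rfl
            intro j hj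
            by_cases hxj : x j = 0
            · have hbj : b j = 0 := hzero j hj hxj
              have hαj : α i₁ j = 0 := by
                rw [hbdef] at hbj
                have := (Finset.sum_eq_zero_iff_of_nonneg
                  (fun i _ => mul_nonneg (hlam0 i) (Nat.cast_nonneg (α i j)))).1 hbj i₁
                  (Finset.mem_univ i₁)
                rcases mul_eq_zero.1 this with h | h
                · exact absurd h hlami₁
                · exact_mod_cast h
              simp [hαj]
            · simp only [hy'def]
              rw [if_neg hxj, Real.rpow_natCast]
          rw [hHs, hi₁e, hHG]
          exact hGA i₁
        calc ∏ j ∈ S, x j ^ (b j) = ∏ i ∈ T, (H i) ^ (lam i) := by rw [e1, e2, e3]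
          _ ≤ Hs := hHsle
          _ ≤ A := hHsA
    -- assemble case (b)
    calc ∏ j ∈ S, x j ^ β j ≤ (∏ j ∈ S, x j ^ (b j)) * r ^ (∑ j ∈ S, ((β j : ℝ) - b j)) := step1
      _ ≤ A * r ^ ((N' - D : ℕ) : ℝ) := by
          apply mul_le_mul step4 step3 (Real.rpow_nonneg hr0.le _) hA0
      _ = A * r ^ (N' - D) := by rw [Real.rpow_natCast]

lemma norm_fderiv_apply_le {n : ℕ} (f : ℂ × (Fin n → ℂ) → ℂ) (p : ℂ × (Fin n → ℂ))
    (hd : DifferentiableAt ℂ f p) (v : ℂ × (Fin n → ℂ)) (B r : ℝ) (hr : 0 < r)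
    (hbound : ∀ h : ℂ, h ≠ 0 → Complex.abs h ≤ r →
      Complex.abs (f (p + h • v) - f p) ≤ Complex.abs h * B) :
    Complex.abs (fderiv ℂ f p v) ≤ B := by
  have hline : HasDerivAt (fun h : ℂ => p + h • v) v 0 := by
    simpa using ((hasDerivAt_id (0 : ℂ)).smul_const v).const_add p
  have hd' : HasFDerivAt f (fderiv ℂ f p) (p + (0 : ℂ) • v) := by
    simpa using hd.hasFDerivAt
  have hg : HasDerivAt (fun h : ℂ => f (p + h • v)) (fderiv ℂ f p v) 0 :=
    hd'.comp_hasDerivAt 0 hline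
  have hslope := hasDerivAt_iff_tendsto_slope.1 hg
  have htd : Tendsto (fun h : ℂ => ‖slope (fun h : ℂ => f (p + h • v)) 0 h‖) (𝓝[≠] (0 : ℂ))
      (𝓝 ‖fderiv ℂ f p v‖) := hslope.norm
  rw [← Complex.norm_eq_abs]
  refine le_of_tendsto htd ?_
  have hev1 : ∀ᶠ h in 𝓝[≠] (0 : ℂ), Complex.abs h ≤ r := by
    have h1 : ∀ᶠ h in 𝓝 (0 : ℂ), Complex.abs h ≤ r := by
      filter_upwards [Metric.closedBall_mem_nhds (0 : ℂ) hr] with h hh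
      simpa [Complex.dist_eq, Complex.norm_eq_abs] using hh
    exact h1.filter_mono nhdsWithin_le_nhds
  have hev2 : ∀ᶠ h in 𝓝[≠] (0 : ℂ), h ≠ 0 := eventually_mem_nhdsWithin
  filter_upwards [hev1, hev2] with h h1 h2
  rw [slope_def_field]
  simp only [zero_smul, add_zero, sub_zero]
  rw [norm_div]
  have hh0 : (0 : ℝ) < ‖h‖ := by simpa [norm_pos_iff] using h2
  rw [div_le_iff₀ hh0]
  calc ‖f (p + h • v) - f p‖ ≤ Complex.abs h * B := hbound h h2 h1
    _ = B * ‖h‖ := by rw [Complex.norm_eq_abs]; ring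

lemma abs_sub_le_tsum {ι : Type*} (F G : ι → ℂ) (a b : ℂ) (hF : HasSum F a) (hG : HasSum G b)
    (M : ι → ℝ) (hM : Summable M) (hFG : ∀ p, Complex.abs (F p - G p) ≤ M p) :
    Complex.abs (a - b) ≤ ∑' p, M p := by
  have hs := hF.sub hG
  have hnorm : Summable (fun p => ‖F p - G p‖) :=
    Summable.of_nonneg_of_le (fun p => norm_nonneg _)
      (fun p => by rw [Complex.norm_eq_abs]; exact hFG p) hM
  calc Complex.abs (a - b) = ‖∑' p, (F p - G p)‖ := by
        rw [hs.tsum_eq, Complex.norm_eq_abs]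
    _ ≤ ∑' p, ‖F p - G p‖ := norm_tsum_le_tsum_norm hnorm
    _ ≤ ∑' p, M p := Summable.tsum_le_tsum (fun p => by rw [Complex.norm_eq_abs]; exact hFG p) hnorm hM

lemma pow_coeff_bound (r : ℝ) (hr0 : 0 < r) (hr1 : r ≤ 1) (k d e D : ℕ) :
    (k : ℝ) * (2 * r) ^ (k - 1) * (r ^ d * r ^ (e - D)) ≤
      (2 * r)⁻¹ * (r ^ D)⁻¹ * (4 * r) ^ (k + d + e) := by
  have h2r : (0 : ℝ) < 2 * r := by linarith
  have h4r : (0 : ℝ) < 4 * r := by linarith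
  have h1 : (k : ℝ) * (2 * r) ^ (k - 1) ≤ (2 * r)⁻¹ * (4 * r) ^ k := by
    rcases Nat.eq_zero_or_pos k with hk | hk
    · subst hk; simp; positivity
    · have e1 : (2 * r) ^ (k - 1) = (2 * r) ^ k / (2 * r) := by
        field_simp
        rw [mul_comm, pow_sub_one_mul (Nat.pos_iff_ne_zero.1 hk) (2 * r)]
      rw [e1]
      rw [div_eq_inv_mul, ← mul_assoc, mul_comm ((k : ℝ)) (2 * r)⁻¹, mul_assoc]
      apply mul_le_mul_of_nonneg_left _ (by positivity)
      have hk2 : (k : ℝ) ≤ 2 ^ k := by exact_mod_cast (Nat.lt_two_pow_self (n := k)).le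
      calc (k : ℝ) * (2 * r) ^ k ≤ 2 ^ k * (2 * r) ^ k := by
            apply mul_le_mul_of_nonneg_right hk2 (by positivity)
        _ = (4 * r) ^ k := by rw [← mul_pow]; ring_nf
  have h2 : r ^ d ≤ (4 * r) ^ d := by
    apply pow_le_pow_left₀ hr0.le; linarith
  have h3 : r ^ (e - D) ≤ (r ^ D)⁻¹ * (4 * r) ^ e := by
    have e2 : r ^ (e - D) * r ^ D ≤ r ^ e := by
      rw [← pow_add]
      apply pow_le_pow_of_le_one hr0.le hr1
      omega
    have e3 : r ^ e ≤ (4 * r) ^ e := by apply pow_le_pow_left₀ hr0.le; linarith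
    rw [mul_comm, ← div_eq_mul_inv, le_div_iff₀ (by positivity)]
    linarith
  calc (k : ℝ) * (2 * r) ^ (k - 1) * (r ^ d * r ^ (e - D))
      ≤ ((2 * r)⁻¹ * (4 * r) ^ k) * ((4 * r) ^ d * ((r ^ D)⁻¹ * (4 * r) ^ e)) := by
        apply mul_le_mul h1 _ (by positivity) (by positivity)
        apply mul_le_mul h2 h3 (by positivity) (by positivity)
    _ = (2 * r)⁻¹ * (r ^ D)⁻¹ * (4 * r) ^ (k + d + e) := by
        rw [pow_add, pow_add]; ring


set_option maxHeartbeats 2000000 in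
set_option synthInstance.maxHeartbeats 200000 in


theorem deriv_t_z1_dominated_aux {n m : ℕ} [NeZero n] (hm : 0 < m)
    (f : ℂ × (Fin n → ℂ) → ℂ) (U : Set (ℂ × (Fin n → ℂ)))
    (hU : U ∈ nhds (0 : ℂ × (Fin n → ℂ))) (hf : AnalyticOnNhd ℂ f U)
    (c : ℕ → (Fin n → ℕ) → ℂ)
    (hsum : ∀ x ∈ U, HasSum (fun p : ℕ × (Fin n → ℕ) =>
      c p.1 p.2 * x.1 ^ p.1 * ∏ j, x.2 j ^ p.2 j) (f x))
    (α : Fin m → Fin n → ℕ) (hα0 : ∀ i, α i 0 = 0)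
    -- (a): every monomial of `f` containing `z₁` satisfies `β_j ≥ a_j := max_i α_i_j`
    -- for all `j ≠ 1`
    (ha : ∀ k β, c k β ≠ 0 → 1 ≤ β 0 →
      ∀ j : Fin n, j ≠ 0 → (Finset.univ.sup fun i => α i j) ≤ β j)
    -- (b): every monomial of `∂f/∂t` not containing `z₁` lies on or above the Newton
    -- polyhedron determined by the `α_i` (in the variables `z₂,…,z_n`)
    (hb : ∀ k β, c k β ≠ 0 → 1 ≤ k → β 0 = 0 →
      (fun j : {j : Fin n // j ≠ 0} => (β j.1 : ℝ)) ∈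
        convexHull ℝ (Set.range fun i => fun j : {j : Fin n // j ≠ 0} => (α i j.1 : ℝ)) +
          {x : {j : Fin n // j ≠ 0} → ℝ | ∀ j, 0 ≤ x j}) :
    ∃ C > 0, ∃ r > 0, ∀ (t : ℂ) (z : Fin n → ℂ),
      Complex.abs t ≤ r → (∀ j, Complex.abs (z j) ≤ r) →
      Complex.abs (fderiv ℂ f (t, z) (1, 0)) +
          Complex.abs (fderiv ℂ f (t, z) (0, Pi.single 0 1)) ≤
        C * ∑ i, Complex.abs (∏ j, z j ^ α i j) := by
  classical
  obtain ⟨ρ₀, hρ₀pos, hball⟩ := Metric.mem_nhds_iff.1 hU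
  set ρ := min ρ₀ 4 with hρdef
  have hρpos : 0 < ρ := lt_min hρ₀pos (by norm_num)
  have hρ4 : ρ ≤ 4 := min_le_right _ _
  have hballU : Metric.ball (0 : ℂ × (Fin n → ℂ)) ρ ⊆ U :=
    subset_trans (Metric.ball_subset_ball (min_le_left _ _)) hball
  set r := ρ / 8 with hrdef
  have hr0 : 0 < r := by positivity
  have hr1 : r ≤ 1 := by rw [hrdef]; linarith
  have hrρ : 4 * r = ρ / 2 := by rw [hrdef]; ring
  -- membership helper
  have hmem : ∀ (t' : ℂ) (z' : Fin n → ℂ), Complex.abs t' ≤ ρ / 2 →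
      (∀ j, Complex.abs (z' j) ≤ ρ / 2) → (t', z') ∈ U := by
    intro t' z' ht' hz'
    apply hballU
    rw [Metric.mem_ball, dist_zero_right, Prod.norm_def]
    apply max_lt
    · rw [Complex.norm_eq_abs]; linarith
    · have : ‖z'‖ ≤ ρ / 2 := (pi_norm_le_iff_of_nonneg (by linarith)).2
        (fun j => by rw [Complex.norm_eq_abs]; exact hz' j)
      linarith
  -- the comparison point
  set x₀ : ℂ × (Fin n → ℂ) := (((4 * r : ℝ) : ℂ), fun _ => ((4 * r : ℝ) : ℂ)) with hx₀def
  have habs4r : Complex.abs ((4 * r : ℝ) : ℂ) = 4 * r := by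
    rw [Complex.abs_ofReal, abs_of_pos (by linarith)]
  have hx₀U : x₀ ∈ U := by
    apply hmem
    · rw [habs4r, hrρ]
    · intro j; rw [habs4r, hrρ]
  set E : ℕ × (Fin n → ℕ) → ℝ :=
    fun p => Complex.abs (c p.1 p.2) * (4 * r) ^ (p.1 + ∑ j, p.2 j) with hEdef
  have hE : Summable E := by
    have h0 := (hsum x₀ hx₀U).summable.norm
    apply h0.congr
    intro p
    simp only [hx₀def, hEdef, Complex.norm_eq_abs, map_mul, map_pow, map_prod, habs4r,
      Finset.prod_pow_eq_pow_sum, pow_add]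
    ring
  have hE0 : ∀ p, 0 ≤ E p := by
    intro p
    rw [hEdef]
    positivity
  clear_value E
  set T := ∑' p, E p with hTdef
  have hT0 : 0 ≤ T := tsum_nonneg (fun p => hE0 p)
  clear_value T
  set D := ∑ j ∈ Finset.univ.erase (0 : Fin n), (Finset.univ.sup fun i => α i j) with hDdef
  set K := (2 * r)⁻¹ * (r ^ D)⁻¹ with hKdef
  have hK0 : 0 < K := by positivity
  clear_value K
  refine ⟨2 * K * T + 1, by have := mul_nonneg hK0.le hT0; nlinarith, r, hr0, ?_⟩
  intro t z ht hz
  set AA := ∑ i, ∏ j, Complex.abs (z j) ^ α i j with hAAdef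
  have hAA0 : 0 ≤ AA := Finset.sum_nonneg fun i _ => Finset.prod_nonneg fun j _ =>
    pow_nonneg (Complex.abs.nonneg _) _
  clear_value AA
  have hAeq : ∑ i, Complex.abs (∏ j, z j ^ α i j) = AA := by
    rw [hAAdef]
    apply Finset.sum_congr rfl
    intro i _
    rw [map_prod]
    exact Finset.prod_congr rfl fun j _ => map_pow _ _ _
  have hrhalf : r ≤ ρ / 2 := by rw [hrdef]; linarith
  have hmemtz : (t, z) ∈ U := hmem t z (le_trans ht hrhalf) (fun j => le_trans (hz j) hrhalf)
  have hd : DifferentiableAt ℂ f (t, z) := (hf (t, z) hmemtz).differentiableAt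
  -- common monomial bound
  have hmono : ∀ (k : ℕ) (β : Fin n → ℕ), c k β ≠ 0 → (1 ≤ β 0 ∨ 1 ≤ k) →
      ∏ j ∈ Finset.univ.erase 0, Complex.abs (z j) ^ β j ≤
        AA * r ^ ((∑ j ∈ Finset.univ.erase 0, β j) - D) := by
    intro k β hc hcase
    rw [hAAdef, hDdef]
    apply key_monomial hm α hα0 r hr0 hr1 _ (fun j => Complex.abs.nonneg _) hz β
    by_cases hβ0 : 1 ≤ β 0
    · exact Or.inl (ha k β hc hβ0)
    · have hβ00 : β 0 = 0 := by omega
      rcases hcase with hcase | hcase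
      · omega
      · exact Or.inr (hb k β hc hcase hβ00)
  -- direction t
  have hbd1 : ∀ h : ℂ, h ≠ 0 → Complex.abs h ≤ r →
      Complex.abs (f ((t, z) + h • ((1 : ℂ), (0 : Fin n → ℂ))) - f (t, z)) ≤
        Complex.abs h * (K * AA * T) := by
    intro h hne hhr
    have hpt : (t, z) + h • ((1 : ℂ), (0 : Fin n → ℂ)) = (t + h, z) := by
      simp [Prod.ext_iff]
    rw [hpt]
    have hth : Complex.abs (t + h) ≤ 2 * r :=
      le_trans (Complex.abs.add_le t h) (by linarith)
    have hs1 := hsum (t + h, z) (hmem _ _ (by linarith [hth, hrρ, hr0])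
      (fun j => le_trans (hz j) hrhalf))
    have hs2 := hsum (t, z) hmemtz
    have hterm : ∀ p : ℕ × (Fin n → ℕ),
        Complex.abs ((c p.1 p.2 * (t + h) ^ p.1 * ∏ j, z j ^ p.2 j) -
          (c p.1 p.2 * t ^ p.1 * ∏ j, z j ^ p.2 j)) ≤ Complex.abs h * (K * AA) * E p := by
      rintro ⟨k, β⟩
      simp only
      have hfac : c k β * (t + h) ^ k * ∏ j, z j ^ β j -
          c k β * t ^ k * ∏ j, z j ^ β j =
          c k β * ((t + h) ^ k - t ^ k) * ∏ j, z j ^ β j := by ring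
      rw [hfac, map_mul, map_mul]
      rcases eq_or_ne (c k β) 0 with hc | hc
      · rw [hc]; simp only [map_zero, zero_mul]
        exact mul_nonneg (mul_nonneg (Complex.abs.nonneg _) (mul_nonneg hK0.le hAA0)) (hE0 _)
      rcases Nat.eq_zero_or_pos k with hk | hk
      · subst hk; simp only [pow_zero, sub_self, map_zero, mul_zero, zero_mul]
        exact mul_nonneg (mul_nonneg (Complex.abs.nonneg _) (mul_nonneg hK0.le hAA0)) (hE0 _)
      have h1 : Complex.abs ((t + h) ^ k - t ^ k) ≤ k * (2 * r) ^ (k - 1) * Complex.abs h := by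
        have := abs_pow_sub_pow_le' (t + h) t (2 * r) k hth (by linarith)
        simpa using this
      have h2 : Complex.abs (∏ j, z j ^ β j) ≤
          r ^ (β 0) * (AA * r ^ ((∑ j ∈ Finset.univ.erase 0, β j) - D)) := by
        rw [map_prod]
        simp only [map_pow]
        rw [← Finset.mul_prod_erase Finset.univ _ (Finset.mem_univ (0 : Fin n))]
        apply mul_le_mul (pow_le_pow_left₀ (Complex.abs.nonneg _) (hz 0) _)
          (hmono k β hc (Or.inr hk))
          (Finset.prod_nonneg fun j _ => pow_nonneg (Complex.abs.nonneg _) _)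
          (pow_nonneg hr0.le _)
      calc Complex.abs (c k β) * Complex.abs ((t + h) ^ k - t ^ k) *
            Complex.abs (∏ j, z j ^ β j)
          ≤ Complex.abs (c k β) * ((k : ℝ) * (2 * r) ^ (k - 1) * Complex.abs h) *
            (r ^ (β 0) * (AA * r ^ ((∑ j ∈ Finset.univ.erase 0, β j) - D))) := by
            apply mul_le_mul (mul_le_mul_of_nonneg_left h1 (Complex.abs.nonneg _)) h2
              (Complex.abs.nonneg _)
              (mul_nonneg (Complex.abs.nonneg _) (mul_nonneg (by positivity)
                (Complex.abs.nonneg _)))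
        _ ≤ Complex.abs h * (K * AA) * E (k, β) := by
            have hp := pow_coeff_bound r hr0 hr1 k (β 0) (∑ j ∈ Finset.univ.erase 0, β j) D
            have hsplit : ∑ j, β j = β 0 + ∑ j ∈ Finset.univ.erase 0, β j :=
              (Finset.add_sum_erase _ _ (Finset.mem_univ 0)).symm
            have e1 : Complex.abs (c k β) * ((k : ℝ) * (2 * r) ^ (k - 1) * Complex.abs h) *
                (r ^ (β 0) * (AA * r ^ ((∑ j ∈ Finset.univ.erase 0, β j) - D))) =
                (Complex.abs (c k β) * Complex.abs h * AA) *
                  ((k : ℝ) * (2 * r) ^ (k - 1) *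
                    (r ^ (β 0) * r ^ ((∑ j ∈ Finset.univ.erase 0, β j) - D))) := by ring
            rw [e1, hEdef]
            simp only
            rw [hsplit]
            calc (Complex.abs (c k β) * Complex.abs h * AA) *
                  ((k : ℝ) * (2 * r) ^ (k - 1) *
                    (r ^ (β 0) * r ^ ((∑ j ∈ Finset.univ.erase 0, β j) - D)))
                ≤ (Complex.abs (c k β) * Complex.abs h * AA) *
                  (K * (4 * r) ^ (k + β 0 + ∑ j ∈ Finset.univ.erase 0, β j)) := by
                  apply mul_le_mul_of_nonneg_left _
                    (mul_nonneg (mul_nonneg (Complex.abs.nonneg _) (Complex.abs.nonneg _)) hAA0)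
                  rw [hKdef]; exact hp
              _ = Complex.abs h * (K * AA) *
                  (Complex.abs (c k β) * (4 * r) ^ (k + (β 0 + ∑ j ∈ Finset.univ.erase 0, β j))) := by
                  rw [← add_assoc]; ring
    have hmaj : Summable (fun p => Complex.abs h * (K * AA) * E p) := hE.mul_left _
    refine le_trans (abs_sub_le_tsum _ _ _ _ hs1 hs2 _ hmaj hterm) ?_
    rw [tsum_mul_left, ← hTdef]
    exact le_of_eq (by ring)
  -- direction z₁
  have hbd2 : ∀ h : ℂ, h ≠ 0 → Complex.abs h ≤ r →
      Complex.abs (f ((t, z) + h • (((0 : ℂ), Pi.single (0 : Fin n) (1 : ℂ)) : ℂ × (Fin n → ℂ))) - f (t, z)) ≤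
        Complex.abs h * (K * AA * T) := by
    intro h hne hhr
    set z' : Fin n → ℂ := z + h • (Pi.single (0 : Fin n) (1 : ℂ) : Fin n → ℂ) with hz'def
    have hz'0 : z' 0 = z 0 + h := by simp [hz'def]
    have hz'ne : ∀ j : Fin n, j ≠ 0 → z' j = z j := by
      intro j hj
      simp [hz'def, Pi.single_eq_of_ne hj]
    have hpt : (t, z) + h • (((0 : ℂ), Pi.single (0 : Fin n) (1 : ℂ)) : ℂ × (Fin n → ℂ)) = (t, z') := by
      simp [Prod.ext_iff, hz'def]
    rw [hpt]
    have hz0h : Complex.abs (z 0 + h) ≤ 2 * r :=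
      le_trans (Complex.abs.add_le _ _) (by linarith [hz 0])
    have hz'le : ∀ j, Complex.abs (z' j) ≤ ρ / 2 := by
      intro j
      by_cases hj : j = 0
      · subst hj; rw [hz'0]; linarith [hz0h, hrρ, hr0]
      · rw [hz'ne j hj]; exact le_trans (hz j) hrhalf
    have hs1 := hsum (t, z') (hmem _ _ (le_trans ht hrhalf) hz'le)
    have hs2 := hsum (t, z) hmemtz
    have hterm : ∀ p : ℕ × (Fin n → ℕ),
        Complex.abs ((c p.1 p.2 * t ^ p.1 * ∏ j, z' j ^ p.2 j) -
          (c p.1 p.2 * t ^ p.1 * ∏ j, z j ^ p.2 j)) ≤ Complex.abs h * (K * AA) * E p := by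
      rintro ⟨k, β⟩
      simp only
      have hps1 : ∏ j, z' j ^ β j =
          (z 0 + h) ^ (β 0) * ∏ j ∈ Finset.univ.erase 0, z j ^ β j := by
        rw [← Finset.mul_prod_erase Finset.univ _ (Finset.mem_univ (0 : Fin n)), hz'0]
        congr 1
        exact Finset.prod_congr rfl fun j hj => by rw [hz'ne j (Finset.ne_of_mem_erase hj)]
      have hps2 : ∏ j, z j ^ β j =
          z 0 ^ (β 0) * ∏ j ∈ Finset.univ.erase 0, z j ^ β j :=
        (Finset.mul_prod_erase Finset.univ _ (Finset.mem_univ (0 : Fin n))).symm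
      have hfac : c k β * t ^ k * ∏ j, z' j ^ β j - c k β * t ^ k * ∏ j, z j ^ β j =
          c k β * t ^ k * ((z 0 + h) ^ (β 0) - z 0 ^ (β 0)) *
            ∏ j ∈ Finset.univ.erase 0, z j ^ β j := by
        rw [hps1, hps2]; ring
      rw [hfac, map_mul, map_mul, map_mul]
      rcases eq_or_ne (c k β) 0 with hc | hc
      · rw [hc]; simp only [map_zero, zero_mul]
        exact mul_nonneg (mul_nonneg (Complex.abs.nonneg _) (mul_nonneg hK0.le hAA0)) (hE0 _)
      rcases Nat.eq_zero_or_pos (β 0) with hβ0 | hβ0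
      · rw [hβ0]; simp only [pow_zero, sub_self, map_zero, mul_zero, zero_mul]
        exact mul_nonneg (mul_nonneg (Complex.abs.nonneg _) (mul_nonneg hK0.le hAA0)) (hE0 _)
      have h1 : Complex.abs ((z 0 + h) ^ (β 0) - z 0 ^ (β 0)) ≤
          (β 0 : ℝ) * (2 * r) ^ (β 0 - 1) * Complex.abs h := by
        have := abs_pow_sub_pow_le' (z 0 + h) (z 0) (2 * r) (β 0) hz0h (by linarith [hz 0])
        simpa using this
      have h2 : ∏ j ∈ Finset.univ.erase 0, Complex.abs (z j) ^ β j ≤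
          AA * r ^ ((∑ j ∈ Finset.univ.erase 0, β j) - D) := hmono k β hc (Or.inl hβ0)
      have h3 : Complex.abs (t ^ k) ≤ r ^ k := by
        rw [map_pow]; exact pow_le_pow_left₀ (Complex.abs.nonneg _) ht _
      have h4 : Complex.abs (∏ j ∈ Finset.univ.erase 0, z j ^ β j) =
          ∏ j ∈ Finset.univ.erase 0, Complex.abs (z j) ^ β j := by
        rw [map_prod]; exact Finset.prod_congr rfl fun j _ => map_pow _ _ _
      rw [h4]
      calc Complex.abs (c k β) * Complex.abs (t ^ k) *
            Complex.abs ((z 0 + h) ^ (β 0) - z 0 ^ (β 0)) *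
            ∏ j ∈ Finset.univ.erase 0, Complex.abs (z j) ^ β j
          ≤ Complex.abs (c k β) * r ^ k *
            ((β 0 : ℝ) * (2 * r) ^ (β 0 - 1) * Complex.abs h) *
            (AA * r ^ ((∑ j ∈ Finset.univ.erase 0, β j) - D)) := by
            apply mul_le_mul _ h2
              (Finset.prod_nonneg fun j _ => pow_nonneg (Complex.abs.nonneg _) _)
              (mul_nonneg (mul_nonneg (Complex.abs.nonneg _) (pow_nonneg hr0.le _))
                (mul_nonneg (mul_nonneg (Nat.cast_nonneg _) (pow_nonneg (by positivity) _))
                  (Complex.abs.nonneg _)))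
            apply mul_le_mul (mul_le_mul_of_nonneg_left h3 (Complex.abs.nonneg _)) h1
              (Complex.abs.nonneg _)
              (mul_nonneg (Complex.abs.nonneg _) (pow_nonneg hr0.le _))
        _ ≤ Complex.abs h * (K * AA) * E (k, β) := by
            have hp := pow_coeff_bound r hr0 hr1 (β 0) k (∑ j ∈ Finset.univ.erase 0, β j) D
            have hsplit : ∑ j, β j = β 0 + ∑ j ∈ Finset.univ.erase 0, β j :=
              (Finset.add_sum_erase _ _ (Finset.mem_univ 0)).symm
            have e1 : Complex.abs (c k β) * r ^ k *
                ((β 0 : ℝ) * (2 * r) ^ (β 0 - 1) * Complex.abs h) *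
                (AA * r ^ ((∑ j ∈ Finset.univ.erase 0, β j) - D)) =
                (Complex.abs (c k β) * Complex.abs h * AA) *
                  ((β 0 : ℝ) * (2 * r) ^ (β 0 - 1) *
                    (r ^ k * r ^ ((∑ j ∈ Finset.univ.erase 0, β j) - D))) := by ring
            rw [e1, hEdef]
            simp only
            rw [hsplit]
            calc (Complex.abs (c k β) * Complex.abs h * AA) *
                  ((β 0 : ℝ) * (2 * r) ^ (β 0 - 1) *
                    (r ^ k * r ^ ((∑ j ∈ Finset.univ.erase 0, β j) - D)))
                ≤ (Complex.abs (c k β) * Complex.abs h * AA) *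
                  (K * (4 * r) ^ (β 0 + k + ∑ j ∈ Finset.univ.erase 0, β j)) := by
                  apply mul_le_mul_of_nonneg_left _
                    (mul_nonneg (mul_nonneg (Complex.abs.nonneg _) (Complex.abs.nonneg _)) hAA0)
                  rw [hKdef]; exact hp
              _ = Complex.abs h * (K * AA) *
                  (Complex.abs (c k β) * (4 * r) ^ (k + (β 0 + ∑ j ∈ Finset.univ.erase 0, β j))) := by
                  have : β 0 + k + ∑ j ∈ Finset.univ.erase 0, β j =
                      k + (β 0 + ∑ j ∈ Finset.univ.erase 0, β j) := by omega
                  rw [this]; ring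
    have hmaj : Summable (fun p => Complex.abs h * (K * AA) * E p) := hE.mul_left _
    refine le_trans (abs_sub_le_tsum _ _ _ _ hs1 hs2 _ hmaj hterm) ?_
    rw [tsum_mul_left, ← hTdef]
    exact le_of_eq (by ring)
  have hder1 := norm_fderiv_apply_le f (t, z) hd ((1 : ℂ), (0 : Fin n → ℂ)) (K * AA * T) r hr0 hbd1
  have hder2 := norm_fderiv_apply_le f (t, z) hd (((0 : ℂ), Pi.single (0 : Fin n) (1 : ℂ)) : ℂ × (Fin n → ℂ))
    (K * AA * T) r hr0 hbd2
  rw [hAeq]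
  have hfin : (2 * K * T + 1) * AA = K * AA * T + K * AA * T + AA := by ring
  rw [hfin]
  linarith [hder1, hder2, hAA0]

/-- Relation (r2) of Step 2: if the Taylor coefficients of the analytic function `f(t,z)`
satisfy conditions (a) and (b) coming from admissibility, then near the origin
`|∂f/∂t| + |∂f/∂z₁| ≲ Σ_i |z^{α_i}|`. -/
theorem deriv_t_z1_dominated {n m : ℕ} [NeZero n] (hm : 0 < m)
    (f : ℂ × (Fin n → ℂ) → ℂ) (U : Set (ℂ × (Fin n → ℂ)))
    (hU : U ∈ nhds (0 : ℂ × (Fin n → ℂ))) (hf : AnalyticOnNhd ℂ f U)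
    (c : ℕ → (Fin n → ℕ) → ℂ)
    (hsum : ∀ x ∈ U, HasSum (fun p : ℕ × (Fin n → ℕ) =>
      c p.1 p.2 * x.1 ^ p.1 * ∏ j, x.2 j ^ p.2 j) (f x))
    (α : Fin m → Fin n → ℕ) (hα0 : ∀ i, α i 0 = 0)
    -- (a): every monomial of `f` containing `z₁` satisfies `β_j ≥ a_j := max_i α_i_j`
    -- for all `j ≠ 1`
    (ha : ∀ k β, c k β ≠ 0 → 1 ≤ β 0 →
      ∀ j : Fin n, j ≠ 0 → (Finset.univ.sup fun i => α i j) ≤ β j)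
    -- (b): every monomial of `∂f/∂t` not containing `z₁` lies on or above the Newton
    -- polyhedron determined by the `α_i` (in the variables `z₂,…,z_n`)
    (hb : ∀ k β, c k β ≠ 0 → 1 ≤ k → β 0 = 0 →
      (fun j : {j : Fin n // j ≠ 0} => (β j.1 : ℝ)) ∈
        convexHull ℝ (Set.range fun i => fun j : {j : Fin n // j ≠ 0} => (α i j.1 : ℝ)) +
          {x : {j : Fin n // j ≠ 0} → ℝ | ∀ j, 0 ≤ x j}) :
    ∃ C > 0, ∃ r > 0, ∀ (t : ℂ) (z : Fin n → ℂ),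
      ‖t‖ ≤ r → (∀ j, ‖z j‖ ≤ r) →
      ‖fderiv ℂ f (t, z) (1, 0)‖ +
          ‖fderiv ℂ f (t, z) (0, Pi.single 0 1)‖ ≤
        C * ∑ i, ‖∏ j, z j ^ α i j‖ := by
  simpa only [Complex.norm_eq_abs] using
    deriv_t_z1_dominated_aux hm f U hU hf c hsum α hα0 ha hb
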